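/- Let G be a locally finite connected graph, S ⊆ V(G) finite, and suppose G is the increasing union of connected one-ended subgraphs Gₙ such that each Gₙ₊₁ is an extension of Gₙ of infinite growth (every component of Gₙ₊₁ − Gₙ is infinite) with every infinite component of G − V(Gₙ) meeting Gₙ₊₁ − Gₙ in an infinite connected subgraph. Then G − S has exactly one infinite component; hence G is one-ended. -/

import Mathlib

open SimpleGraph

variable {V W U : Type*}

/-- A walk is a *maximal internally isolated path* if it is a path, its endpoints have
degree `≠ 2`, and all internal vertices have degree `2`. -/
def IsMiiPath (G : SimpleGraph V) {u v : V} (p : G.Walk u v) : Prop :=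
  p.IsPath ∧ (G.neighborSet u).ncard ≠ 2 ∧ (G.neighborSet v).ncard ≠ 2 ∧
    ∀ w ∈ p.support, w ≠ u → w ≠ v → (G.neighborSet w).ncard = 2

/-- The mii-spectrum of a graph: lengths of its maximal internally isolated paths. -/
def miiSpectrum (G : SimpleGraph V) : Set ℕ :=
  {k | ∃ (u v : V) (p : G.Walk u v), IsMiiPath G p ∧ p.length = k}

/-- The space of ends of a graph: compatible choices of a component of the complement of
each finite vertex set. -/
def EndSpace (G : SimpleGraph V) : Type _ :=
  {f : ∀ K : Finset V, G.ComponentCompl (K : Set V) //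
    ∀ (K L : Finset V) (h : K ⊆ L), (f L).hom (by exact_mod_cast h) = f K}

instance (G : SimpleGraph V) (K : Set V) : TopologicalSpace (G.ComponentCompl K) := ⊥

instance (G : SimpleGraph V) : TopologicalSpace (EndSpace G) :=
  instTopologicalSpaceSubtype

/-- A graph is one-ended if it has exactly one end. -/
def OneEnded (G : SimpleGraph V) : Prop :=
  ∃ e : EndSpace G, ∀ e' : EndSpace G, e' = e

/-- An end is free if it is determined by its component outside some finite vertex set. -/
def IsFreeEnd {G : SimpleGraph V} (e : EndSpace G) : Prop :=
  ∃ K : Finset V, ∀ e' : EndSpace G, e'.1 K = e.1 K → e' = e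

/-- The set of ends lying in the closure of a vertex set `X`. -/
def endBoundary (G : SimpleGraph V) (X : Set V) : Set (EndSpace G) :=
  {e | ∀ K : Finset V, ((e.1 K).supp ∩ X).Infinite}

/-- The disjoint union of two graphs. -/
def sumGraph (G : SimpleGraph V) (F : SimpleGraph W) : SimpleGraph (V ⊕ W) where
  Adj x y := (∃ a b, x = Sum.inl a ∧ y = Sum.inl b ∧ G.Adj a b) ∨
    (∃ a b, x = Sum.inr a ∧ y = Sum.inr b ∧ F.Adj a b)
  symm := by
    constructor
    rintro x y (⟨a, b, rfl, rfl, h⟩ | ⟨a, b, rfl, rfl, h⟩)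
    · exact Or.inl ⟨b, a, rfl, rfl, h.symm⟩
    · exact Or.inr ⟨b, a, rfl, rfl, h.symm⟩
  loopless := by
    constructor
    rintro x (⟨a, b, rfl, h, hab⟩ | ⟨a, b, rfl, h, hab⟩) <;>
      · cases h; exact hab.ne rfl

open Classical in
/-- The setoid identifying each `v ∈ D` (in the left graph) with `ψ v` (in the right one). -/
noncomputable def glueSetoid (D : Set V) (ψ : V → W) : Setoid (V ⊕ W) :=
  Setoid.ker (Sum.elim (fun v => if v ∈ D then Sum.inr (ψ v) else (Sum.inl v : V ⊕ W)) Sum.inr)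

/-- The gluing sum `G ⊕_ψ F` of two graphs along a partial map `ψ` with domain `D`. -/
noncomputable def gluingSum (G : SimpleGraph V) (F : SimpleGraph W) (D : Set V) (ψ : V → W) :
    SimpleGraph (Quotient (glueSetoid D ψ)) :=
  SimpleGraph.fromRel (fun a b => ∃ x y : V ⊕ W,
    a = Quotient.mk (glueSetoid D ψ) x ∧ b = Quotient.mk (glueSetoid D ψ) y ∧
      (sumGraph G F).Adj x y)

/-- Two graphs are hypomorphic if there is a vertex bijection `φ` such that deleting `v`
and `φ v` always yields isomorphic graphs. -/
def Hypomorphic (G : SimpleGraph V) (H : SimpleGraph W) : Prop :=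
  ∃ φ : V ≃ W, ∀ v : V,
    Nonempty ((G.induce {u | u ≠ v}) ≃g (H.induce {u | u ≠ φ v}))

/-- The quotient setoid collapsing a subset `A` to a single point. -/
def collapseSetoid {X : Type*} (A : Set X) : Setoid X where
  r a b := a = b ∨ (a ∈ A ∧ b ∈ A)
  iseqv := by
    constructor
    · exact fun a => Or.inl rfl
    · rintro a b (rfl | ⟨ha, hb⟩); exacts [Or.inl rfl, Or.inr ⟨hb, ha⟩]
    · rintro a b c (rfl | ⟨ha, hb⟩) (rfl | ⟨hb', hc⟩)
      exacts [Or.inl rfl, Or.inr ⟨hb', hc⟩, Or.inr ⟨ha, hb⟩, Or.inr ⟨ha, hc⟩]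

/-- The one-way infinite path (ray) on `ℕ`. -/
def rayGraph : SimpleGraph ℕ :=
  SimpleGraph.fromRel (fun m n => n = m + 1)

/-- `r : ℕ → V` is a ray in `G`. -/
structure IsRay (G : SimpleGraph V) (r : ℕ → V) : Prop where
  inj : Function.Injective r
  adj : ∀ n, G.Adj (r n) (r (n + 1))

/-- Two rays are equivalent if for every finite vertex set `S` they have tails lying in,
and connected within, the same component of `G - S`. -/
def RayEquiv (G : SimpleGraph V) (r r' : ℕ → V) : Prop :=
  ∀ S : Finset V, ∃ n n' : ℕ,
    (∀ k ≥ n, r k ∉ (S : Set V)) ∧ (∀ k ≥ n', r' k ∉ (S : Set V)) ∧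
    ∃ (h : r n ∈ ((S : Set V))ᶜ) (h' : r' n' ∈ ((S : Set V))ᶜ),
      (G.induce ((S : Set V))ᶜ).Reachable ⟨r n, h⟩ ⟨r' n', h'⟩

section AuxProof

open CategoryTheory

variable {α : Type*}

private lemma aux_lf_induce {G : SimpleGraph α} (hlf : ∀ v, (G.neighborSet v).Finite)
    (X : Set α) : ∀ x : X, ((G.induce X).neighborSet x).Finite := by
  intro x
  have h1 : (G.induce X).neighborSet x ⊆ Subtype.val ⁻¹' (G.neighborSet (x : α)) :=
    fun y hy => hy
  exact Set.Finite.subset ((hlf (x : α)).preimage Subtype.val_injective.injOn) h1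

private lemma aux_supp_bridge {G : SimpleGraph α} {K : Set α} (C : G.ComponentCompl K) :
    ComponentCompl.supp C = Subtype.val '' (ConnectedComponent.supp C) := by
  ext v
  constructor
  · rintro ⟨h, rfl⟩
    exact ⟨⟨v, h⟩, rfl, rfl⟩
  · rintro ⟨⟨w, hw⟩, hmem, rfl⟩
    exact ⟨hw, hmem⟩

private lemma aux_supp_infinite_iff {G : SimpleGraph α} {K : Set α} (C : G.ComponentCompl K) :
    (ComponentCompl.supp C).Infinite ↔ (ConnectedComponent.supp C).Infinite := by
  rw [aux_supp_bridge]
  exact ⟨fun h => h.of_image, fun h => h.image Subtype.val_injective.injOn⟩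

private lemma aux_reach_up {G : SimpleGraph α} {s t : Set α} (h : s ⊆ t) {u v : s}
    (hr : (G.induce s).Reachable u v) :
    (G.induce t).Reachable ⟨u, h u.2⟩ ⟨v, h v.2⟩ :=
  hr.map (G.induceHomOfLE h).toHom

private lemma aux_oneEnded_infinite {G : SimpleGraph α} (h : OneEnded G) : Infinite α := by
  by_contra hα
  rw [not_infinite_iff_finite] at hα
  haveI := Fintype.ofFinite α
  obtain ⟨e, -⟩ := h
  obtain ⟨v, hvK, -⟩ := (e.1 Finset.univ).nonempty
  exact hvK (by simp)

private lemma aux_exists_infinite_comp {G : SimpleGraph α} [Infinite α]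
    (hlf : ∀ v, (G.neighborSet v).Finite) (hc : G.Connected) (S : Finset α) :
    ∃ C : G.ComponentCompl (S : Set α), (ComponentCompl.supp C).Infinite := by
  classical
  haveI : G.LocallyFinite := fun v => (hlf v).fintype
  haveI : Fact G.Preconnected := ⟨hc.preconnected⟩
  by_contra h
  push_neg at h
  have hsub : ((S : Set α))ᶜ ⊆ ⋃ C : G.ComponentCompl (S : Set α), ComponentCompl.supp C :=
    fun v hv => Set.mem_iUnion.mpr ⟨G.componentComplMk hv, hv, rfl⟩
  exact S.finite_toSet.infinite_compl (Set.Finite.subset (Set.finite_iUnion h) hsub)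

private lemma aux_exists_end_through {G : SimpleGraph α}
    (hlf : ∀ v, (G.neighborSet v).Finite) (hc : G.Connected) (S : Finset α)
    (C : G.ComponentCompl (S : Set α)) (hC : (ComponentCompl.supp C).Infinite) :
    ∃ e : EndSpace G, e.1 S = C := by
  classical
  haveI : G.LocallyFinite := fun v => (hlf v).fintype
  haveI : Fact G.Preconnected := ⟨hc.preconnected⟩
  let F : (Finset α)ᵒᵖ ⥤ Type _ :=
    { obj := fun K => {D : G.ComponentCompl ((K.unop : Finset α) : Set α) //
        (ComponentCompl.supp D ∩ ComponentCompl.supp C).Infinite}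
      map := fun {K L} f => TypeCat.ofHom fun D => ⟨D.1.hom (le_of_op_hom f),
        D.2.mono (Set.inter_subset_inter_left _ (D.1.subset_hom _))⟩
      map_id := fun K => by apply TypeCat.homEquiv.injective; funext D; apply Subtype.ext; exact D.1.hom_refl
      map_comp := fun {K L M} f g => by
        apply TypeCat.homEquiv.injective
        funext D
        apply Subtype.ext
        exact (by
          exact D.1.hom_trans (Finset.coe_subset.mpr (le_of_op_hom f))
            (Finset.coe_subset.mpr (le_of_op_hom g))) }
  haveI hne : ∀ K : (Finset α)ᵒᵖ, Nonempty (F.obj K) := by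
    intro K
    by_contra hem
    rw [not_nonempty_iff] at hem
    have hfin : ∀ D : G.ComponentCompl ((K.unop : Finset α) : Set α),
        (ComponentCompl.supp D ∩ ComponentCompl.supp C).Finite := by
      intro D
      rw [← Set.not_infinite]
      intro hD
      exact hem.false ⟨D, hD⟩
    have hsub : (ComponentCompl.supp C \ (K.unop : Set α)) ⊆
        ⋃ D : G.ComponentCompl ((K.unop : Finset α) : Set α),
          (ComponentCompl.supp D ∩ ComponentCompl.supp C) := by
      rintro v ⟨hvC, hvK⟩
      exact Set.mem_iUnion.mpr ⟨G.componentComplMk hvK, ⟨hvK, rfl⟩, hvC⟩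
    exact (hC.diff K.unop.finite_toSet) (Set.Finite.subset (Set.finite_iUnion hfin) hsub)
  haveI hfin : ∀ K : (Finset α)ᵒᵖ, Finite (F.obj K) := fun K => Subtype.finite
  obtain ⟨s, hs⟩ := nonempty_sections_of_finite_inverse_system F
  refine ⟨⟨fun K => (s (Opposite.op K)).1, fun K L h => ?_⟩, ?_⟩
  · exact congrArg Subtype.val (hs (CategoryTheory.opHomOfLE h))
  · show (s (Opposite.op S)).1 = C
    obtain ⟨v, ⟨hv1, he1⟩, hv2, he2⟩ := (s (Opposite.op S)).2.nonempty
    rw [← he1, ← he2]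
  
private lemma aux_comp_eq {G : SimpleGraph α} (hlf : ∀ v, (G.neighborSet v).Finite)
    (hc : G.Connected) (hone : OneEnded G) (S : Finset α)
    {C D : G.ComponentCompl (S : Set α)}
    (hC : (ComponentCompl.supp C).Infinite) (hD : (ComponentCompl.supp D).Infinite) : C = D := by
  obtain ⟨e0, he0⟩ := hone
  obtain ⟨eC, hC'⟩ := aux_exists_end_through hlf hc S C hC
  obtain ⟨eD, hD'⟩ := aux_exists_end_through hlf hc S D hD
  rw [← hC', ← hD', he0 eC, he0 eD]

end AuxProof

section AuxProof2

variable {α : Type*}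

private noncomputable def auxK (X : Set α) (S : Finset α) : Finset X :=
  Set.Finite.toFinset
    (Set.Finite.preimage Subtype.val_injective.injOn S.finite_toSet :
      (Subtype.val ⁻¹' (S : Set α)).Finite)

private lemma auxK_mem {X : Set α} {S : Finset α} {x : X} :
    x ∈ auxK X S ↔ (x : α) ∈ (S : Set α) := by
  simp [auxK]

private noncomputable def auxIso (G : SimpleGraph α) (X : Set α) (S : Finset α) :
    ((G.induce X).induce ((↑(auxK X S) : Set X))ᶜ) ≃g G.induce (X \ (S : Set α)) where
  toEquiv :=
    { toFun := fun x => ⟨((x : X) : α), (x : X).2, fun hS => x.2 ((auxK_mem (X := X)).mpr hS)⟩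
      invFun := fun y => ⟨⟨(y : α), y.2.1⟩, fun hK => y.2.2 ((auxK_mem (X := X)).mp hK)⟩
      left_inv := fun x => Subtype.ext (Subtype.ext rfl)
      right_inv := fun y => rfl }
  map_rel_iff' := Iff.rfl

private lemma aux_iso_supp_infinite {β γ : Type*} {H1 : SimpleGraph β} {H2 : SimpleGraph γ}
    (φ : H1 ≃g H2) {C : H1.ConnectedComponent} (h : C.supp.Infinite) :
    (φ.connectedComponentEquiv C).supp.Infinite :=
  Set.infinite_coe_iff.mp ((C.isoEquivSupp φ).infinite_iff.mp h.to_subtype)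

private lemma aux_unique_del {G : SimpleGraph α} (hlf : ∀ v, (G.neighborSet v).Finite)
    {X : Set α} (hXc : (G.induce X).Connected) (honeX : OneEnded (G.induce X)) (S : Finset α)
    {C D : (G.induce (X \ (S : Set α))).ConnectedComponent}
    (hC : C.supp.Infinite) (hD : D.supp.Infinite) : C = D := by
  let φ := (auxIso G X S).symm
  have h1 := aux_iso_supp_infinite φ hC
  have h2 := aux_iso_supp_infinite φ hD
  have h3 := aux_comp_eq (G := G.induce X) (aux_lf_induce hlf X) hXc honeX (auxK X S)
    ((aux_supp_infinite_iff _).mpr h1) ((aux_supp_infinite_iff _).mpr h2)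
  exact φ.connectedComponentEquiv.injective h3

private lemma aux_exists_del {G : SimpleGraph α} (hlf : ∀ v, (G.neighborSet v).Finite)
    {X : Set α} (hXc : (G.induce X).Connected) (hXinf : X.Infinite) (S : Finset α) :
    ∃ C : (G.induce (X \ (S : Set α))).ConnectedComponent, C.supp.Infinite := by
  haveI : Infinite X := hXinf.to_subtype
  obtain ⟨C, hC⟩ := aux_exists_infinite_comp (G := G.induce X) (aux_lf_induce hlf X) hXc (auxK X S)
  exact ⟨(auxIso G X S).connectedComponentEquiv C,
    aux_iso_supp_infinite _ ((aux_supp_infinite_iff _).mp hC)⟩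

private lemma aux_finite_del {G : SimpleGraph α} (hlf : ∀ v, (G.neighborSet v).Finite)
    {X : Set α} (hXc : (G.induce X).Connected) (S : Finset α) :
    Finite ((G.induce (X \ (S : Set α))).ConnectedComponent) := by
  haveI : (G.induce X).LocallyFinite := fun v => (aux_lf_induce hlf X v).fintype
  haveI : Fact (G.induce X).Preconnected := ⟨hXc.preconnected⟩
  exact Finite.of_equiv ((G.induce X).ComponentCompl ((auxK X S : Finset X) : Set X))
    (auxIso G X S).connectedComponentEquiv

private lemma aux_fiber {s : Set α} {ι : Type*} [Finite ι] (hs : s.Infinite)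
    (f : ∀ x, x ∈ s → ι) : ∃ i, {x | ∃ h : x ∈ s, f x h = i}.Infinite := by
  by_contra h
  push_neg at h
  exact hs (Set.Finite.subset (Set.finite_iUnion h)
    (fun x hx => Set.mem_iUnion.mpr ⟨f x hx, hx, rfl⟩))

private lemma aux_range_infinite {s : Set α} {ι : Type*} (hs : s.Infinite)
    (f : ∀ x, x ∈ s → ι) (hfib : ∀ i, {x | ∃ h : x ∈ s, f x h = i}.Finite) :
    {i | ∃ x h, f x h = i}.Infinite := by
  by_contra h
  rw [Set.not_infinite] at h
  refine hs (Set.Finite.subset (Set.Finite.biUnion h fun i _ => hfib i) fun x hx => ?_)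
  exact Set.mem_biUnion ⟨x, hx, rfl⟩ ⟨hx, rfl⟩

end AuxProof2

/-- a locally finite connected graph which is an increasing union of
connected one-ended subgraphs with infinite growth (and whose infinite components outside
each stage meet the next stage in an infinite connected subgraph) has exactly one infinite
component after removing any finite set; hence it is one-ended. -/
theorem oneEnded_of_increasing_union (G : SimpleGraph V)
    (hlf : ∀ v, (G.neighborSet v).Finite) (hc : G.Connected)
    (A : ℕ → Set V) (hA : Monotone A) (hAu : ⋃ n, A n = Set.univ)
    (hconn : ∀ n, (G.induce (A n)).Connected)
    (hone : ∀ n, OneEnded (G.induce (A n)))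
    (hgrowth : ∀ n, ∀ C : (G.induce (A (n + 1) \ A n)).ConnectedComponent, C.supp.Infinite)
    (hmeet : ∀ n, ∀ C : (G.induce (A n)ᶜ).ConnectedComponent, C.supp.Infinite →
      ∃ D : Set V, D ⊆ (Subtype.val '' C.supp) ∩ (A (n + 1) \ A n) ∧ D.Infinite ∧
        (G.induce D).Connected) :
    (∀ S : Finset V, ∃! C : (G.induce ((S : Set V))ᶜ).ConnectedComponent, C.supp.Infinite)
      ∧ OneEnded G := by
  classical
  have hAinf : ∀ n, (A n).Infinite := fun n =>
    Set.infinite_coe_iff.mp (aux_oneEnded_infinite (hone n))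
  haveI hVinf : Infinite V :=
    @Infinite.of_injective _ _ (hAinf 0).to_subtype (Subtype.val : (A 0) → V)
      Subtype.val_injective
  have hS_sub : ∀ S : Finset V, ∃ n, (S : Set V) ⊆ A n := by
    intro S
    have hv : ∀ v : V, ∃ k, v ∈ A k := fun v => Set.mem_iUnion.mp (hAu ▸ Set.mem_univ v)
    refine ⟨S.sup fun v => (hv v).choose, fun v hvS => ?_⟩
    exact hA (Finset.le_sup (f := fun v => (hv v).choose) (Finset.mem_coe.mp hvS))
      (hv v).choose_spec
  have main : ∀ S : Finset V,
      ∃! C : (G.induce ((S : Set V))ᶜ).ConnectedComponent, C.supp.Infinite := by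
    intro S
    obtain ⟨C0, hC0⟩ := aux_exists_infinite_comp hlf hc S
    have hC0' : (ConnectedComponent.supp C0).Infinite := (aux_supp_infinite_iff C0).mp hC0
    have key : ∀ C D : (G.induce ((S : Set V))ᶜ).ConnectedComponent,
        C.supp.Infinite → D.supp.Infinite → C = D := by
      intro C D hCi hDi
      obtain ⟨n, hSA⟩ := hS_sub S
      have hnm : A n ⊆ A (n + 1) := hA (Nat.le_succ n)
      have hSm : (S : Set V) ⊆ A (n + 1) := hSA.trans hnm
      have hPsub : A (n + 1) \ (S : Set V) ⊆ ((S : Set V))ᶜ := fun z hz => hz.2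
      obtain ⟨W, hW⟩ := aux_exists_del hlf (hconn (n + 1)) (hAinf (n + 1)) S
      have Wuniq : ∀ Q : (G.induce (A (n + 1) \ (S : Set V))).ConnectedComponent,
          Q.supp.Infinite → Q = W :=
        fun Q hQ => aux_unique_del hlf (hconn (n + 1)) (hone (n + 1)) S hQ hW
      have pushW : ∀ (T : Set V) (hTsub : T ⊆ A (n + 1) \ (S : Set V)), T.Infinite →
          (∀ a b (ha : a ∈ T) (hb : b ∈ T),
            (G.induce (A (n + 1) \ (S : Set V))).Reachable ⟨a, hTsub ha⟩ ⟨b, hTsub hb⟩) →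
          T ⊆ Subtype.val '' W.supp := by
        intro T hTsub hTinf hreach x hx
        have hTQ : T ⊆ Subtype.val ''
            ((G.induce (A (n + 1) \ (S : Set V))).connectedComponentMk ⟨x, hTsub hx⟩).supp :=
          fun z hz => ⟨⟨z, hTsub hz⟩, ConnectedComponent.sound (hreach z x hz hx), rfl⟩
        have hQinf :
            ((G.induce (A (n + 1) \ (S : Set V))).connectedComponentMk ⟨x, hTsub hx⟩).supp.Infinite :=
          (hTinf.mono hTQ).of_image
        rw [← Wuniq _ hQinf]
        exact hTQ hx
      have meets : ∀ (C : (G.induce ((S : Set V))ᶜ).ConnectedComponent), C.supp.Infinite →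
          ∃ x : V, x ∈ Subtype.val '' W.supp ∧ x ∈ Subtype.val '' C.supp := by
        intro C hCi
        have hCimInf : (Subtype.val '' C.supp).Infinite :=
          hCi.image Subtype.val_injective.injOn
        have hCimS : ∀ z ∈ Subtype.val '' C.supp, z ∉ (S : Set V) := by
          rintro z ⟨zz, -, rfl⟩; exact zz.2
        by_cases hi : ((Subtype.val '' C.supp) ∩ (A n \ (S : Set V))).Infinite
        · -- case (i): C meets A n heavily
          haveI := aux_finite_del hlf (hconn n) S
          obtain ⟨E, hE⟩ := aux_fiber hi
            (fun x hx => (G.induce (A n \ (S : Set V))).connectedComponentMk ⟨x, hx.2⟩)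
          have hfibT : {x | ∃ h : x ∈ (Subtype.val '' C.supp) ∩ (A n \ (S : Set V)),
              (G.induce (A n \ (S : Set V))).connectedComponentMk ⟨x, h.2⟩ = E} ⊆
              Subtype.val '' E.supp := by
            rintro x ⟨h, heq⟩
            exact ⟨⟨x, h.2⟩, heq, rfl⟩
          have hTinf : (Subtype.val '' E.supp).Infinite := hE.mono hfibT
          have hTsub : Subtype.val '' E.supp ⊆ A (n + 1) \ (S : Set V) := by
            rintro z ⟨zz, -, rfl⟩
            exact ⟨hnm zz.2.1, zz.2.2⟩
          have hreach : ∀ a b (ha : a ∈ Subtype.val '' E.supp) (hb : b ∈ Subtype.val '' E.supp),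
              (G.induce (A (n + 1) \ (S : Set V))).Reachable ⟨a, hTsub ha⟩ ⟨b, hTsub hb⟩ := by
            rintro a b ⟨az, haz, rfl⟩ ⟨bz, hbz, rfl⟩
            have h0 : (G.induce (A n \ (S : Set V))).Reachable az bz :=
              ConnectedComponent.exact (haz.trans hbz.symm)
            have hsub' : A n \ (S : Set V) ⊆ A (n + 1) \ (S : Set V) :=
              fun z hz => ⟨hnm hz.1, hz.2⟩
            exact aux_reach_up hsub' h0
          have hTW := pushW _ hTsub hTinf hreach
          obtain ⟨x0, hx0f⟩ := hE.nonempty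
          exact ⟨x0, hTW (hfibT hx0f), hx0f.choose.1⟩
        · -- case (ii): C leaves A n
          have hBfin0 : ((Subtype.val '' C.supp) ∩ (A n \ (S : Set V))).Finite :=
            Set.not_infinite.mp hi
          have hii : ((Subtype.val '' C.supp) \ A n).Infinite := by
            by_contra hfin
            rw [Set.not_infinite] at hfin
            have hsub2 : (Subtype.val '' C.supp) ⊆
                ((Subtype.val '' C.supp) \ A n) ∪
                  ((Subtype.val '' C.supp) ∩ (A n \ (S : Set V))) := by
              intro z hz
              rw [Set.mem_union]
              by_cases hzA : z ∈ A n
              · exact Or.inr ⟨hz, hzA, hCimS z hz⟩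
              · exact Or.inl ⟨hz, hzA⟩
            exact hCimInf (Set.Finite.subset (hfin.union hBfin0) hsub2)
          -- any component of `G - A n` through a point of C has image inside C
          have hcompC : ∀ (x : V) (hx : x ∈ (Subtype.val '' C.supp) \ A n) (z : V),
              z ∈ Subtype.val ''
                ((G.induce ((A n)ᶜ)).connectedComponentMk ⟨x, hx.2⟩).supp →
              z ∈ Subtype.val '' C.supp := by
            rintro x hx z ⟨zz, hzz, rfl⟩
            obtain ⟨xz, hxz, hxval⟩ := hx.1
            have h0 : (G.induce ((A n)ᶜ)).Reachable zz ⟨x, hx.2⟩ :=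
              ConnectedComponent.exact hzz
            have h1 := aux_reach_up (Set.compl_subset_compl.mpr hSA) h0
            refine ⟨⟨(zz : V), (Set.compl_subset_compl.mpr hSA) zz.2⟩, ?_, rfl⟩
            show (G.induce ((S : Set V))ᶜ).connectedComponentMk _ = C
            have h2 : (G.induce ((S : Set V))ᶜ).connectedComponentMk
                ⟨x, (Set.compl_subset_compl.mpr hSA) hx.2⟩ = C := by
              have h3 : (G.induce ((S : Set V))ᶜ).connectedComponentMk
                  ⟨x, (Set.compl_subset_compl.mpr hSA) hx.2⟩ =
                  (G.induce ((S : Set V))ᶜ).connectedComponentMk xz := by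
                congr 1
                exact Subtype.ext hxval.symm
              exact h3.trans hxz
            exact (ConnectedComponent.sound h1).trans h2
          by_cases hEx : ∃ (x : V) (hx : x ∈ (Subtype.val '' C.supp) \ A n),
              ((G.induce ((A n)ᶜ)).connectedComponentMk ⟨x, hx.2⟩).supp.Infinite
          · -- (ii-a): an infinite component of G - A n inside C
            obtain ⟨x, hx, hxinf⟩ := hEx
            obtain ⟨D, hDsub, hDinf, hDconn⟩ := hmeet n _ hxinf
            have hDP : D ⊆ A (n + 1) \ (S : Set V) := fun z hz =>
              ⟨(hDsub hz).2.1, fun hzS => (hDsub hz).2.2 (hSA hzS)⟩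
            have hreachD : ∀ a b (ha : a ∈ D) (hb : b ∈ D),
                (G.induce (A (n + 1) \ (S : Set V))).Reachable ⟨a, hDP ha⟩ ⟨b, hDP hb⟩ := by
              intro a b ha hb
              exact aux_reach_up hDP (hDconn.preconnected ⟨a, ha⟩ ⟨b, hb⟩)
            have hDW := pushW D hDP hDinf hreachD
            obtain ⟨d, hd⟩ := hDinf.nonempty
            exact ⟨d, hDW hd, hcompC x hx d (hDsub hd).1⟩
          · -- (ii-b): contradiction
            exfalso
            push_neg at hEx
            have hBfin : ((Subtype.val '' C.supp) ∩ (A n \ (S : Set V))).Finite :=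
              Set.not_infinite.mp hi
            have hUfin : (⋃ w ∈ (Subtype.val '' C.supp) ∩ (A n \ (S : Set V)),
                G.neighborSet w).Finite :=
              hBfin.biUnion (fun w _ => hlf w)
            have hfib : ∀ E : (G.induce ((A n)ᶜ)).ConnectedComponent,
                {x | ∃ h : x ∈ (Subtype.val '' C.supp) \ A n,
                  (G.induce ((A n)ᶜ)).connectedComponentMk ⟨x, h.2⟩ = E}.Finite := by
              intro E
              rcases Set.eq_empty_or_nonempty
                  {x | ∃ h : x ∈ (Subtype.val '' C.supp) \ A n,
                    (G.induce ((A n)ᶜ)).connectedComponentMk ⟨x, h.2⟩ = E} with hne | hne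
              · rw [hne]; exact Set.finite_empty
              · obtain ⟨x1, hx1, hx1E⟩ := hne
                have hsupfin : E.supp.Finite := by
                  have h2 := hEx x1 hx1
                  rw [hx1E] at h2
                  exact h2
                refine Set.Finite.subset (hsupfin.image Subtype.val) ?_
                rintro y ⟨hy, hyE⟩
                exact ⟨⟨y, hy.2⟩, hyE, rfl⟩
            have hRinf := aux_range_infinite hii
              (fun x hx => (G.induce ((A n)ᶜ)).connectedComponentMk ⟨x, hx.2⟩) hfib
            -- each component in the range has a boundary vertex
            have hbdry : ∀ E ∈ {i | ∃ x, ∃ hx : x ∈ (Subtype.val '' C.supp) \ A n,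
                (G.induce ((A n)ᶜ)).connectedComponentMk ⟨x, hx.2⟩ = i},
                ∃ a, a ∈ Subtype.val '' (ConnectedComponent.supp E) ∧
                  a ∈ ⋃ w ∈ (Subtype.val '' C.supp) ∩ (A n \ (S : Set V)), G.neighborSet w := by
              rintro E ⟨x, hx, hxE⟩
              have hTfin : (Subtype.val '' E.supp).Finite := by
                have h2 := hEx x hx
                rw [hxE] at h2
                exact h2.image Subtype.val
              obtain ⟨c, hcC, hcT⟩ := (hCimInf.diff hTfin).nonempty
              obtain ⟨xz, hxz, hxval⟩ := hx.1
              obtain ⟨cz, hcz, hcval⟩ := hcC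
              have hrxc : (G.induce ((S : Set V))ᶜ).Reachable xz cz :=
                ConnectedComponent.exact (hxz.trans hcz.symm)
              obtain ⟨p⟩ := hrxc
              have hxT' : xz ∈ {z : {v : V // v ∈ ((S : Set V))ᶜ} |
                  (z : V) ∈ Subtype.val '' E.supp} := by
                exact ⟨⟨x, hx.2⟩, hxE, hxval.symm⟩
              have hcT' : cz ∉ {z : {v : V // v ∈ ((S : Set V))ᶜ} |
                  (z : V) ∈ Subtype.val '' E.supp} := by
                intro hmem
                exact hcT (hcval ▸ hmem)
              obtain ⟨dart, hdarts, hfst, hsnd⟩ := p.exists_boundary_dart _ hxT' hcT'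
              have hadj : G.Adj (dart.fst : V) (dart.snd : V) := dart.adj
              have hbAn : (dart.snd : V) ∈ A n := by
                by_contra hbn
                obtain ⟨az, haz, haval⟩ := hfst
                apply hsnd
                refine ⟨⟨(dart.snd : V), hbn⟩, ?_, rfl⟩
                rw [← haz]
                apply ConnectedComponent.sound
                apply SimpleGraph.Adj.reachable
                show G.Adj (dart.snd : V) (az : V)
                rw [haval]
                exact hadj.symm
              have hbC : (dart.snd : V) ∈ Subtype.val '' C.supp := by
                have hsupp := SimpleGraph.Walk.dart_snd_mem_support_of_mem_darts p hdarts
                have hr : (G.induce ((S : Set V))ᶜ).Reachable xz dart.snd :=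
                  ⟨p.takeUntil _ hsupp⟩
                exact ⟨dart.snd, (ConnectedComponent.sound hr.symm).trans hxz, rfl⟩
              refine ⟨(dart.fst : V), hfst, ?_⟩
              refine Set.mem_biUnion ⟨hbC, hbAn, dart.snd.2⟩ ?_
              exact hadj.symm
            -- build an injection from the infinite range into the finite set U
            have hchoice : ∀ E : {i // i ∈ {i | ∃ x, ∃ hx : x ∈ (Subtype.val '' C.supp) \ A n,
                (G.induce ((A n)ᶜ)).connectedComponentMk ⟨x, hx.2⟩ = i}},
                ∃ a, a ∈ Subtype.val '' (ConnectedComponent.supp E.1) ∧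
                  a ∈ ⋃ w ∈ (Subtype.val '' C.supp) ∩ (A n \ (S : Set V)), G.neighborSet w :=
              fun E => hbdry E.1 E.2
            haveI := hRinf.to_subtype
            refine (Set.infinite_of_injective_forall_mem
              (f := fun E => (hchoice E).choose) ?_ (fun E => (hchoice E).choose_spec.2)) hUfin
            intro E1 E2 heq
            have heq' : (hchoice E1).choose = (hchoice E2).choose := heq
            obtain ⟨z1, hz1, hv1⟩ := (hchoice E1).choose_spec.1
            obtain ⟨z2, hz2, hv2⟩ := (hchoice E2).choose_spec.1
            have hz12 : z1 = z2 := Subtype.val_injective (hv1.trans (heq'.trans hv2.symm))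
            apply Subtype.ext
            rw [← hz1, ← hz2, hz12]
      obtain ⟨x, hxW, hxC⟩ := meets C hCi
      obtain ⟨y, hyW, hyD⟩ := meets D hDi
      obtain ⟨xw, hxw, hxval⟩ := hxW
      obtain ⟨yw, hyw, hyval⟩ := hyW
      have hr0 : (G.induce (A (n + 1) \ (S : Set V))).Reachable xw yw :=
        ConnectedComponent.exact (hxw.trans hyw.symm)
      have hr1 := aux_reach_up hPsub hr0
      obtain ⟨xc, hxc, hxval2⟩ := hxC
      obtain ⟨yc, hyc, hyval2⟩ := hyD
      rw [← hxc, ← hyc]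
      apply ConnectedComponent.sound
      have e1 : xc = ⟨(xw : V), hPsub xw.2⟩ :=
        Subtype.ext (hxval2.trans hxval.symm)
      have e2 : yc = ⟨(yw : V), hPsub yw.2⟩ :=
        Subtype.ext (hyval2.trans hyval.symm)
      rw [e1, e2]
      exact hr1
    exact ⟨C0, hC0', fun C hC => key C C0 hC hC0'⟩
  refine ⟨main, ?_⟩
  refine ⟨⟨fun K => (main K).choose, ?_⟩, ?_⟩
  · intro K L h
    have h1 : (ConnectedComponent.supp (main L).choose).Infinite := (main L).choose_spec.1
    have h2 : (ComponentCompl.supp (SimpleGraph.ComponentCompl.hom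
        (show (K : Set V) ⊆ (L : Set V) by exact_mod_cast h) (main L).choose)).Infinite :=
      SimpleGraph.ComponentCompl.hom_infinite _ _ ((aux_supp_infinite_iff _).mpr h1)
    exact (main K).choose_spec.2 _ ((aux_supp_infinite_iff _).mp h2)
  · rintro ⟨f, hf⟩
    refine Subtype.ext (funext fun K => ?_)
    have hinf : (ComponentCompl.supp (f K)).Infinite := by
      rw [SimpleGraph.ComponentCompl.infinite_iff_in_all_ranges]
      intro L h
      exact ⟨f L, hf K L h⟩
    exact (main K).choose_spec.2 _ ((aux_supp_infinite_iff _).mp hinf)
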